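/- Let q be a prime power and n ≥ 4. Let τ be the automorphism of L = PSL_n(q) induced by the map A ↦ (Aᵀ)⁻¹ of SL_n(F_q). Let K₀ be the image in PSL_n(q) of the subgroup {diag(A, 1) : A ∈ SL_{n−1}(F_q)} of SL_n(F_q) (block-diagonal matrices with an (n−1)×(n−1) block A of determinant 1 and final diagonal entry 1). Then τ maps K₀ onto K₀, the quotient K₀/Z(K₀) of K₀ by its center is isomorphic to PSL_{n−1}(q), and the automorphism that τ induces on K₀/Z(K₀) is nontrivial. -/
import Mathlib


open Matrix

variable (n : ℕ) (F : Type) [Field F]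

/-- The automorphism `A ↦ (Aᵀ)⁻¹` of `SL_n(F)`. -/
noncomputable def tauSL : Matrix.SpecialLinearGroup (Fin n) F ≃*
    Matrix.SpecialLinearGroup (Fin n) F where
  toFun A := ⟨((A : Matrix (Fin n) (Fin n) F)ᵀ)⁻¹, by
    rw [Matrix.det_nonsing_inv, Matrix.det_transpose, A.prop, Ring.inverse_one]⟩
  invFun A := ⟨((A : Matrix (Fin n) (Fin n) F)ᵀ)⁻¹, by
    rw [Matrix.det_nonsing_inv, Matrix.det_transpose, A.prop, Ring.inverse_one]⟩
  left_inv := by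
    intro A
    ext i j
    show ((((A : Matrix (Fin n) (Fin n) F)ᵀ)⁻¹)ᵀ)⁻¹ i j = _
    rw [← Matrix.transpose_nonsing_inv,
      Matrix.nonsing_inv_nonsing_inv _ (by rw [Matrix.det_transpose, A.prop]; exact isUnit_one),
      Matrix.transpose_transpose]
  right_inv := by
    intro A
    ext i j
    show ((((A : Matrix (Fin n) (Fin n) F)ᵀ)⁻¹)ᵀ)⁻¹ i j = _
    rw [← Matrix.transpose_nonsing_inv,
      Matrix.nonsing_inv_nonsing_inv _ (by rw [Matrix.det_transpose, A.prop]; exact isUnit_one),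
      Matrix.transpose_transpose]
  map_mul' := by
    intro A B
    ext i j
    show (((A * B : Matrix.SpecialLinearGroup (Fin n) F) :
      Matrix (Fin n) (Fin n) F)ᵀ)⁻¹ i j = _
    rw [Matrix.SpecialLinearGroup.coe_mul, Matrix.transpose_mul, Matrix.mul_inv_rev]
    rfl

/-- Any automorphism maps the center onto the center. -/
theorem map_center_eq {G : Type} [Group G] (e : G ≃* G) :
    Subgroup.map e.toMonoidHom (Subgroup.center G) = Subgroup.center G := by
  ext x
  simp only [Subgroup.mem_map]
  constructor
  · rintro ⟨y, hy, rfl⟩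
    rw [Subgroup.mem_center_iff] at hy ⊢
    intro g
    have := hy (e.symm g)
    calc g * e.toMonoidHom y = e (e.symm g * y) := by simp
      _ = e (y * e.symm g) := by rw [this]
      _ = e.toMonoidHom y * g := by simp
  · intro hx
    refine ⟨e.symm x, ?_, by simp⟩
    rw [Subgroup.mem_center_iff] at hx ⊢
    intro g
    apply e.injective
    rw [_root_.map_mul, _root_.map_mul, MulEquiv.apply_symm_apply]
    exact hx (e g)

/-- The graph automorphism `τ` of `PSL_n(F)` induced by `A ↦ (Aᵀ)⁻¹`. -/
noncomputable def tauPSL : Matrix.ProjectiveSpecialLinearGroup (Fin n) F ≃*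
    Matrix.ProjectiveSpecialLinearGroup (Fin n) F :=
  QuotientGroup.congr _ _ (tauSL n F) (map_center_eq (tauSL n F))

/-- The identification `Fin (n-1) ⊕ Fin 1 ≃ Fin n` (for `n ≥ 1`). -/
def finSplit (hn : 1 ≤ n) : Fin (n - 1) ⊕ Fin 1 ≃ Fin n :=
  finSumFinEquiv.trans (finCongr (by omega))

/-- The block-diagonal embedding `SL_{n-1}(F) → SL_n(F)`, `A ↦ diag(A, 1)`. -/
noncomputable def diagEmbed (hn : 1 ≤ n) :
    Matrix.SpecialLinearGroup (Fin (n - 1)) F →* Matrix.SpecialLinearGroup (Fin n) F where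
  toFun A := ⟨(Matrix.fromBlocks (A : Matrix (Fin (n - 1)) (Fin (n - 1)) F) 0 0
      (1 : Matrix (Fin 1) (Fin 1) F)).submatrix (finSplit n hn).symm (finSplit n hn).symm, by
    rw [Matrix.det_submatrix_equiv_self, Matrix.det_fromBlocks_zero₂₁, A.prop,
      Matrix.det_one, one_mul]⟩
  map_one' := by
    apply Subtype.ext
    show (Matrix.fromBlocks ((1 : Matrix.SpecialLinearGroup (Fin (n - 1)) F) :
      Matrix (Fin (n - 1)) (Fin (n - 1)) F) 0 0 1).submatrix
      (finSplit n hn).symm (finSplit n hn).symm = 1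
    rw [Matrix.SpecialLinearGroup.coe_one, Matrix.fromBlocks_one,
      Matrix.submatrix_one_equiv]
  map_mul' := by
    intro A B
    apply Subtype.ext
    show (Matrix.fromBlocks ((A * B : Matrix.SpecialLinearGroup (Fin (n - 1)) F) :
        Matrix (Fin (n - 1)) (Fin (n - 1)) F) 0 0 1).submatrix
        (finSplit n hn).symm (finSplit n hn).symm =
      ((Matrix.fromBlocks (A : Matrix (Fin (n - 1)) (Fin (n - 1)) F) 0 0 1).submatrix
        (finSplit n hn).symm (finSplit n hn).symm) *
      ((Matrix.fromBlocks (B : Matrix (Fin (n - 1)) (Fin (n - 1)) F) 0 0 1).submatrix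
        (finSplit n hn).symm (finSplit n hn).symm)
    rw [Matrix.submatrix_mul_equiv _ _ _ (finSplit n hn).symm _,
      Matrix.fromBlocks_multiply, Matrix.SpecialLinearGroup.coe_mul]
    simp

-- coe lemmas
theorem diagEmbed_coe (hn : 1 ≤ n) (A : Matrix.SpecialLinearGroup (Fin (n-1)) F) :
    (diagEmbed n F hn A : Matrix (Fin n) (Fin n) F) =
      (Matrix.fromBlocks (A : Matrix (Fin (n - 1)) (Fin (n - 1)) F) 0 0
        (1 : Matrix (Fin 1) (Fin 1) F)).submatrix (finSplit n hn).symm (finSplit n hn).symm := rfl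

theorem tauSL_coe (A : Matrix.SpecialLinearGroup (Fin n) F) :
    (tauSL n F A : Matrix (Fin n) (Fin n) F) = ((A : Matrix (Fin n) (Fin n) F)ᵀ)⁻¹ := rfl

theorem tauSL_diagEmbed (hn : 1 ≤ n) (A : Matrix.SpecialLinearGroup (Fin (n-1)) F) :
    tauSL n F (diagEmbed n F hn A) = diagEmbed n F hn (tauSL (n-1) F A) := by
  apply Subtype.ext
  rw [tauSL_coe, diagEmbed_coe, diagEmbed_coe, tauSL_coe, transpose_submatrix,
    fromBlocks_transpose, transpose_zero, transpose_zero, transpose_one]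
  apply inv_eq_right_inv
  rw [Matrix.submatrix_mul_equiv _ _ _ (finSplit n hn).symm _, Matrix.fromBlocks_multiply]
  have hA : (A : Matrix (Fin (n-1)) (Fin (n-1)) F)ᵀ * ((A : Matrix (Fin (n-1)) (Fin (n-1)) F)ᵀ)⁻¹ = 1 := by
    apply mul_nonsing_inv
    rw [det_transpose, A.prop]; exact isUnit_one
  simp [hA]

theorem tauPSL_mk (x : Matrix.SpecialLinearGroup (Fin n) F) :
    tauPSL n F (QuotientGroup.mk' _ x) = QuotientGroup.mk' _ (tauSL n F x) := rfl

theorem diagEmbed_inj (hn : 1 ≤ n) : Function.Injective (diagEmbed n F hn) := by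
  intro A B h
  apply Subtype.ext
  have h2 := congrArg (fun M : Matrix.SpecialLinearGroup (Fin n) F =>
    ((M : Matrix (Fin n) (Fin n) F).submatrix (finSplit n hn) (finSplit n hn))) h
  simp only [diagEmbed_coe, Matrix.submatrix_submatrix, Equiv.symm_comp_self,
    Matrix.submatrix_id_id] at h2
  have := congrArg Matrix.toBlocks₁₁ h2
  simpa [Matrix.toBlocks_fromBlocks₁₁] using this

theorem diagEmbed_mem_center (hn : 1 ≤ n)
    (A : Matrix.SpecialLinearGroup (Fin (n-1)) F)
    (h : diagEmbed n F hn A ∈ Subgroup.center (Matrix.SpecialLinearGroup (Fin n) F)) :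
    A = 1 := by
  have := Matrix.SpecialLinearGroup.scalar_eq_self_of_mem_center h (finSplit n hn (Sum.inr 0))
  apply diagEmbed_inj n F hn
  rw [_root_.map_one]
  apply Subtype.ext
  rw [← this]
  have h11 : (diagEmbed n F hn A : Matrix (Fin n) (Fin n) F)
      (finSplit n hn (Sum.inr 0)) (finSplit n hn (Sum.inr 0)) = 1 := by
    rw [diagEmbed_coe]
    simp [Matrix.submatrix_apply]
  rw [h11]
  simp [Matrix.SpecialLinearGroup.coe_one]

theorem map_center_eq2 {G H : Type} [Group G] [Group H] (e : G ≃* H) :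
    Subgroup.map e.toMonoidHom (Subgroup.center G) = Subgroup.center H := by
  ext x
  simp only [Subgroup.mem_map]
  constructor
  · rintro ⟨y, hy, rfl⟩
    rw [Subgroup.mem_center_iff] at hy ⊢
    intro g
    have := hy (e.symm g)
    calc g * e.toMonoidHom y = e (e.symm g * y) := by simp
      _ = e (y * e.symm g) := by rw [this]
      _ = e.toMonoidHom y * g := by simp
  · intro hx
    refine ⟨e.symm x, ?_, by simp⟩
    rw [Subgroup.mem_center_iff] at hx ⊢
    intro g
    apply e.injective
    rw [_root_.map_mul, _root_.map_mul, MulEquiv.apply_symm_apply]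
    exact hx (e g)

noncomputable def centerQuotCongr {G H : Type} [Group G] [Group H] (e : G ≃* H) :
    (G ⧸ Subgroup.center G) ≃* (H ⧸ Subgroup.center H) :=
  QuotientGroup.congr _ _ e (map_center_eq2 e)

theorem part1 (hn : 1 ≤ n) :
    Subgroup.map (tauPSL n F).toMonoidHom
      (Subgroup.map (QuotientGroup.mk' (Subgroup.center (Matrix.SpecialLinearGroup (Fin n) F)))
        (diagEmbed n F hn).range) =
    Subgroup.map (QuotientGroup.mk' (Subgroup.center (Matrix.SpecialLinearGroup (Fin n) F)))
      (diagEmbed n F hn).range := by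
  rw [Subgroup.map_map]
  have hcomm : (tauPSL n F).toMonoidHom.comp
      (QuotientGroup.mk' (Subgroup.center (Matrix.SpecialLinearGroup (Fin n) F))) =
    (QuotientGroup.mk' (Subgroup.center (Matrix.SpecialLinearGroup (Fin n) F))).comp
      (tauSL n F).toMonoidHom := MonoidHom.ext fun x => rfl
  rw [hcomm, ← Subgroup.map_map]
  congr 1
  ext x
  simp only [Subgroup.mem_map, MonoidHom.mem_range]
  constructor
  · rintro ⟨y, ⟨A, rfl⟩, rfl⟩
    exact ⟨tauSL (n-1) F A, (tauSL_diagEmbed n F hn A).symm⟩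
  · rintro ⟨A, rfl⟩
    refine ⟨diagEmbed n F hn ((tauSL (n-1) F).symm A), ⟨_, rfl⟩, ?_⟩
    show tauSL n F _ = _
    rw [tauSL_diagEmbed]
    simp

theorem phi_inj (hn : 1 ≤ n) :
    Function.Injective
      ((QuotientGroup.mk' (Subgroup.center (Matrix.SpecialLinearGroup (Fin n) F))).comp
        (diagEmbed n F hn)) := by
  rw [injective_iff_map_eq_one]
  intro a ha
  have : diagEmbed n F hn a ∈ Subgroup.center (Matrix.SpecialLinearGroup (Fin n) F) :=
    (QuotientGroup.eq_one_iff _).mp ha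
  exact diagEmbed_mem_center n F hn a this

theorem part2 (hn : 1 ≤ n) :
    Nonempty ((↥(Subgroup.map
        (QuotientGroup.mk' (Subgroup.center (Matrix.SpecialLinearGroup (Fin n) F)))
        (diagEmbed n F hn).range) ⧸ Subgroup.center _) ≃*
      Matrix.ProjectiveSpecialLinearGroup (Fin (n - 1)) F) := by
  have hrange : ((QuotientGroup.mk'
      (Subgroup.center (Matrix.SpecialLinearGroup (Fin n) F))).comp
        (diagEmbed n F hn)).range =
      Subgroup.map (QuotientGroup.mk' (Subgroup.center (Matrix.SpecialLinearGroup (Fin n) F)))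
        (diagEmbed n F hn).range := MonoidHom.range_comp _ _
  have e2 := ((MonoidHom.ofInjective (phi_inj n F hn)).trans
    (MulEquiv.subgroupCongr hrange)).symm
  exact ⟨centerQuotCongr e2⟩

theorem part3 (hn : 1 ≤ n) (hn4 : 4 ≤ n) :
    ∃ k ∈ Subgroup.map (QuotientGroup.mk' (Subgroup.center (Matrix.SpecialLinearGroup (Fin n) F)))
        (diagEmbed n F hn).range,
    ∃ k' ∈ Subgroup.map (QuotientGroup.mk' (Subgroup.center (Matrix.SpecialLinearGroup (Fin n) F)))
        (diagEmbed n F hn).range,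
      (tauPSL n F k * k⁻¹) * k' ≠ k' * (tauPSL n F k * k⁻¹) := by
  obtain ⟨i0, i1, i2, h01, h02, h12⟩ :
      ∃ a b c : Fin (n-1), a ≠ b ∧ a ≠ c ∧ b ≠ c :=
    by
      refine ⟨⟨0, by omega⟩, ⟨1, by omega⟩, ⟨2, by omega⟩, ?_, ?_, ?_⟩ <;>
        exact Fin.ne_of_val_ne (by norm_num)
  have h10 : i1 ≠ i0 := h01.symm
  set t : Matrix.SpecialLinearGroup (Fin (n-1)) F :=
    ⟨Matrix.transvection i0 i1 1, Matrix.det_transvection_of_ne i0 i1 h01 1⟩ with ht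
  set u : Matrix.SpecialLinearGroup (Fin (n-1)) F :=
    ⟨Matrix.transvection i0 i2 1, Matrix.det_transvection_of_ne i0 i2 h02 1⟩ with hu
  set s : Matrix.SpecialLinearGroup (Fin (n-1)) F :=
    ⟨Matrix.transvection i0 i1 (-1), Matrix.det_transvection_of_ne i0 i1 h01 (-1)⟩ with hs
  set s2 : Matrix.SpecialLinearGroup (Fin (n-1)) F :=
    ⟨Matrix.transvection i1 i0 (-1), Matrix.det_transvection_of_ne i1 i0 h10 (-1)⟩ with hs2
  have hts : t * s = 1 := by
    apply Subtype.ext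
    rw [Matrix.SpecialLinearGroup.coe_mul]
    show Matrix.transvection i0 i1 1 * Matrix.transvection i0 i1 (-1) = _
    rw [Matrix.transvection_mul_transvection_same i0 i1 h01, add_neg_cancel,
      Matrix.transvection_zero]
    rfl
  have hinv : t⁻¹ = s := inv_eq_of_mul_eq_one_right hts
  have hstdT : (Matrix.single i0 i1 (1:F))ᵀ = Matrix.single i1 i0 1 := by
    ext a b
    simp only [Matrix.transpose_apply, Matrix.single]
    simp only [Matrix.of_apply]
    by_cases hab : i0 = b ∧ i1 = a <;> aesop
  have htT : (Matrix.transvection i0 i1 (1:F))ᵀ = Matrix.transvection i1 i0 1 := by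
    simp [Matrix.transvection, Matrix.transpose_add, hstdT]
  have htau : tauSL (n-1) F t = s2 := by
    apply Subtype.ext
    rw [tauSL_coe]
    show (Matrix.transvection i0 i1 (1:F))ᵀ⁻¹ = Matrix.transvection i1 i0 (-1)
    rw [htT]
    apply inv_eq_right_inv
    rw [Matrix.transvection_mul_transvection_same i1 i0 h10, add_neg_cancel,
      Matrix.transvection_zero]
  have hne : s2 * s * u ≠ u * (s2 * s) := by
    intro h
    have h' : (Matrix.transvection i1 i0 (-1) * Matrix.transvection i0 i1 (-1) *
        Matrix.transvection i0 i2 (1:F) : Matrix (Fin (n-1)) (Fin (n-1)) F) i1 i2 =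
      (Matrix.transvection i0 i2 (1:F) *
        (Matrix.transvection i1 i0 (-1) * Matrix.transvection i0 i1 (-1)) :
          Matrix (Fin (n-1)) (Fin (n-1)) F) i1 i2 :=
      congrArg (fun M : Matrix.SpecialLinearGroup (Fin (n-1)) F =>
        (M : Matrix (Fin (n-1)) (Fin (n-1)) F) i1 i2) h
    rw [Matrix.mul_transvection_apply_same, Matrix.transvection_mul_apply_of_ne _ _ _ _ h10] at h'
    rw [Matrix.transvection_mul_apply_same, Matrix.transvection_mul_apply_same] at h'
    simp only [Matrix.transvection, Matrix.add_apply, Matrix.one_apply_ne h12,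
      Matrix.one_apply_ne h02, Matrix.one_apply_ne h10, Matrix.one_apply_eq] at h'
    rw [Matrix.single_apply_of_ne (h := fun hc => h01 hc.1),
      Matrix.single_apply_of_ne (h := fun hc => h10 hc.2)] at h'
    rw [Matrix.single_apply_of_ne (h := fun hc => h10 hc.2)] at h'
    simp at h'
  refine ⟨_, ⟨diagEmbed n F hn t, ⟨t, rfl⟩, rfl⟩, _, ⟨diagEmbed n F hn u, ⟨u, rfl⟩, rfl⟩, ?_⟩
  intro heq
  apply hne
  have h1 : tauPSL n F (QuotientGroup.mk' _ (diagEmbed n F hn t)) =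
      QuotientGroup.mk' _ (diagEmbed n F hn s2) := by
    rw [tauPSL_mk, tauSL_diagEmbed, htau]
  have h2 : (QuotientGroup.mk' (Subgroup.center (Matrix.SpecialLinearGroup (Fin n) F))
      (diagEmbed n F hn t))⁻¹ = QuotientGroup.mk' _ (diagEmbed n F hn s) := by
    rw [← map_inv, ← map_inv, hinv]
  rw [h1, h2] at heq
  simp only [← _root_.map_mul] at heq
  exact phi_inj n F hn heq

theorem statement_12 (q : ℕ) (hq : IsPrimePow q) (hn : 4 ≤ n)
    (F' : Type) [Field F'] [Fintype F'] (hF : Fintype.card F' = q)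
    (K₀ : Subgroup (Matrix.ProjectiveSpecialLinearGroup (Fin n) F'))
    (hK₀ : K₀ = Subgroup.map
      (QuotientGroup.mk' (Subgroup.center (Matrix.SpecialLinearGroup (Fin n) F')))
      (diagEmbed n F' (by omega)).range) :
    -- `τ` maps `K₀` onto `K₀`, …
    Subgroup.map (tauPSL n F').toMonoidHom K₀ = K₀ ∧
    -- … `K₀/Z(K₀) ≅ PSL_{n-1}(q)`, …
    Nonempty ((↥K₀ ⧸ Subgroup.center ↥K₀) ≃*
      Matrix.ProjectiveSpecialLinearGroup (Fin (n - 1)) F') ∧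
    -- … and the automorphism induced by `τ` on `K₀/Z(K₀)` is nontrivial
    (∃ k ∈ K₀, ∃ k' ∈ K₀,
      (tauPSL n F' k * k⁻¹) * k' ≠ k' * (tauPSL n F' k * k⁻¹)) := by
  subst hK₀
  refine ⟨part1 n F' _, part2 n F' _, part3 n F' _ hn⟩
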